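/- The set of monomials {a^i b^j : 0 ≤ i ≤ p−1, 0 ≤ j ≤ p−1} (images in A of the corresponding words in the free algebra) is a basis of A as a k-vector space; in particular A is finite dimensional over k with dim_k A = p². -/

import Mathlib

noncomputable section

variable (k : Type*) [Field k]

/-- The generator `a` of the free algebra `k⟨a,b⟩`. -/
def aF : FreeAlgebra k (Fin 2) := FreeAlgebra.ι k 0

/-- The generator `b` of the free algebra `k⟨a,b⟩`. -/
def bF : FreeAlgebra k (Fin 2) := FreeAlgebra.ι k 1

/-- The defining relations `a^p = 0`, `b^p = 0`, `ba = ab + (1/2)a²` of `A`. -/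
inductive ARel (p : ℕ) : FreeAlgebra k (Fin 2) → FreeAlgebra k (Fin 2) → Prop
  | apow : ARel p (aF k ^ p) 0
  | bpow : ARel p (bF k ^ p) 0
  | rel : ARel p (bF k * aF k) (aF k * bF k + (2 : k)⁻¹ • aF k ^ 2)

/-- The algebra `A = k⟨a,b⟩/(a^p, b^p, ba − ab − (1/2)a²)`. -/
abbrev A (p : ℕ) := RingQuot (ARel k p)

/-- The image of `a` in `A`. -/
def aA (p : ℕ) : A k p := RingQuot.mkAlgHom k (ARel k p) (aF k)

/-- The image of `b` in `A`. -/
def bA (p : ℕ) : A k p := RingQuot.mkAlgHom k (ARel k p) (bF k)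

namespace MonBasisAux

variable {p : ℕ}

/-- Lowering operator in the first coordinate with scalar weights. -/
def sh1 (s : ℕ → k) : ((Fin p × Fin p) → k) →ₗ[k] ((Fin p × Fin p) → k) where
  toFun f := fun ij => if h : 0 < (ij.1 : ℕ) then
      s (ij.1 : ℕ) * f (⟨(ij.1 : ℕ) - 1, (Nat.sub_le _ _).trans_lt ij.1.isLt⟩, ij.2) else 0
  map_add' f g := by funext ij; by_cases h : 0 < (ij.1 : ℕ) <;> simp [h, mul_add]
  map_smul' c f := by funext ij; by_cases h : 0 < (ij.1 : ℕ) <;> simp [h, mul_left_comm]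

/-- Lowering operator in the second coordinate with scalar weights. -/
def sh2 (s : ℕ → k) : ((Fin p × Fin p) → k) →ₗ[k] ((Fin p × Fin p) → k) where
  toFun f := fun ij => if h : 0 < (ij.2 : ℕ) then
      s (ij.2 : ℕ) * f (ij.1, ⟨(ij.2 : ℕ) - 1, (Nat.sub_le _ _).trans_lt ij.2.isLt⟩) else 0
  map_add' f g := by funext ij; by_cases h : 0 < (ij.2 : ℕ) <;> simp [h, mul_add]
  map_smul' c f := by funext ij; by_cases h : 0 < (ij.2 : ℕ) <;> simp [h, mul_left_comm]

lemma sh1_apply (s : ℕ → k) (f : (Fin p × Fin p) → k) (ij : Fin p × Fin p) :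
    sh1 k s f ij = if _ : 0 < (ij.1 : ℕ) then
      s (ij.1 : ℕ) * f (⟨(ij.1 : ℕ) - 1, (Nat.sub_le _ _).trans_lt ij.1.isLt⟩, ij.2) else 0 := rfl

lemma sh2_apply (s : ℕ → k) (f : (Fin p × Fin p) → k) (ij : Fin p × Fin p) :
    sh2 k s f ij = if _ : 0 < (ij.2 : ℕ) then
      s (ij.2 : ℕ) * f (ij.1, ⟨(ij.2 : ℕ) - 1, (Nat.sub_le _ _).trans_lt ij.2.isLt⟩) else 0 := rfl

lemma sh1_pow_apply_eq_zero (s : ℕ → k) (m : ℕ) :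
    ∀ (f : (Fin p × Fin p) → k) (ij : Fin p × Fin p), (ij.1 : ℕ) < m → ((sh1 k s ^ m) f) ij = 0 := by
  induction m with
  | zero => intro f ij h; exact absurd h (Nat.not_lt_zero _)
  | succ m ih =>
      intro f ij h
      rw [pow_succ', Module.End.mul_apply, sh1_apply]
      rcases Nat.eq_zero_or_pos (ij.1 : ℕ) with h0 | h0
      · rw [dif_neg (by omega)]
      · rw [dif_pos h0, ih _ _ (by simp; omega), mul_zero]

lemma sh2_pow_apply_eq_zero (s : ℕ → k) (m : ℕ) :
    ∀ (f : (Fin p × Fin p) → k) (ij : Fin p × Fin p), (ij.2 : ℕ) < m → ((sh2 k s ^ m) f) ij = 0 := by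
  induction m with
  | zero => intro f ij h; exact absurd h (Nat.not_lt_zero _)
  | succ m ih =>
      intro f ij h
      rw [pow_succ', Module.End.mul_apply, sh2_apply]
      rcases Nat.eq_zero_or_pos (ij.2 : ℕ) with h0 | h0
      · rw [dif_neg (by omega)]
      · rw [dif_pos h0, ih _ _ (by simp; omega), mul_zero]

lemma sh1_pow_p (s : ℕ → k) : (sh1 k s : ((Fin p × Fin p) → k) →ₗ[k] _) ^ p = 0 := by
  apply LinearMap.ext; intro f; funext ij
  simp only [LinearMap.zero_apply, Pi.zero_apply]
  exact sh1_pow_apply_eq_zero k s p f ij ij.1.isLt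

lemma sh2_pow_p (s : ℕ → k) : (sh2 k s : ((Fin p × Fin p) → k) →ₗ[k] _) ^ p = 0 := by
  apply LinearMap.ext; intro f; funext ij
  simp only [LinearMap.zero_apply, Pi.zero_apply]
  exact sh2_pow_apply_eq_zero k s p f ij ij.2.isLt

variable (p) in
/-- The operator realizing left multiplication by `a`. -/
def Xop : ((Fin p × Fin p) → k) →ₗ[k] ((Fin p × Fin p) → k) := sh1 k (fun _ => 1)

variable (p) in
/-- The twisting part of left multiplication by `b`. -/
def Dop : ((Fin p × Fin p) → k) →ₗ[k] ((Fin p × Fin p) → k) :=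
  sh1 k (fun n => (2 : k)⁻¹ * ((n - 1 : ℕ) : k))

variable (p) in
/-- The shift part of left multiplication by `b`. -/
def Yop : ((Fin p × Fin p) → k) →ₗ[k] ((Fin p × Fin p) → k) := sh2 k (fun _ => 1)

variable (p) in
/-- The operator realizing left multiplication by `b`. -/
def Bop : ((Fin p × Fin p) → k) →ₗ[k] ((Fin p × Fin p) → k) := Yop k p + Dop k p

lemma Y_mul_X : Yop k p * Xop k p = Xop k p * Yop k p := by
  apply LinearMap.ext; intro f; funext ij
  obtain ⟨⟨i, hi⟩, ⟨j, hj⟩⟩ := ij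
  simp only [Module.End.mul_apply, Yop, Xop, sh1_apply, sh2_apply]
  by_cases h1 : 0 < i <;> by_cases h2 : 0 < j <;> simp [h1, h2]

lemma Y_mul_D : Yop k p * Dop k p = Dop k p * Yop k p := by
  apply LinearMap.ext; intro f; funext ij
  obtain ⟨⟨i, hi⟩, ⟨j, hj⟩⟩ := ij
  simp only [Module.End.mul_apply, Yop, Dop, sh1_apply, sh2_apply]
  by_cases h1 : 0 < i <;> by_cases h2 : 0 < j <;> simp [h1, h2]

lemma D_mul_X :
    Dop k p * Xop k p = Xop k p * Dop k p + (2 : k)⁻¹ • (Xop k p * Xop k p) := by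
  apply LinearMap.ext; intro f; funext ij
  obtain ⟨⟨i, hi⟩, ⟨j, hj⟩⟩ := ij
  simp only [Module.End.mul_apply, LinearMap.add_apply, LinearMap.smul_apply, Dop, Xop,
    sh1_apply, Pi.add_apply, Pi.smul_apply, smul_eq_mul]
  by_cases h1 : 0 < i <;> by_cases h2 : 0 < i - 1 <;> simp [h1, h2]
  ring

lemma B_mul_X :
    Bop k p * Xop k p = Xop k p * Bop k p + (2 : k)⁻¹ • (Xop k p ^ 2) := by
  rw [Bop, add_mul, Y_mul_X, D_mul_X, mul_add, pow_two]
  abel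

lemma X_pow_p : Xop k p ^ p = 0 := sh1_pow_p k _

lemma B_pow_p [Fact p.Prime] [CharP k p] : Bop k p ^ p = 0 := by
  haveI : CharP (((Fin p × Fin p) → k) →ₗ[k] ((Fin p × Fin p) → k)) p := by
    refine charP_of_injective_algebraMap (R := k)
      (A := ((Fin p × Fin p) → k) →ₗ[k] ((Fin p × Fin p) → k)) ?_ p
    intro x y hxy
    have h0 : 0 < p := (Fact.out : p.Prime).pos
    have h := congrFun (congrArg (fun (T : ((Fin p × Fin p) → k) →ₗ[k] _) =>
      T (fun _ => (1 : k))) hxy) (⟨0, h0⟩, ⟨0, h0⟩)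
    simpa [Module.algebraMap_end_apply] using h
  have hcom : Commute (Yop k p) (Dop k p) := Y_mul_D k
  rw [Bop, add_pow_char_of_commute p hcom]
  rw [Yop, Dop, sh2_pow_p, sh1_pow_p, add_zero]

variable (p) in
/-- The representation of the free algebra on `V`. -/
def rep : FreeAlgebra k (Fin 2) →ₐ[k] (((Fin p × Fin p) → k) →ₗ[k] ((Fin p × Fin p) → k)) :=
  FreeAlgebra.lift k (fun i => if i = 0 then Xop k p else Bop k p)

lemma rep_aF : rep k p (aF k) = Xop k p := by
  rw [aF, rep, FreeAlgebra.lift_ι_apply]; simp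

lemma rep_bF : rep k p (bF k) = Bop k p := by
  rw [bF, rep, FreeAlgebra.lift_ι_apply]; simp

lemma sh1_single (s : ℕ → k) (z : Fin p × Fin p) (h : (z.1 : ℕ) + 1 < p) :
    sh1 k s (Pi.single z 1) =
      s ((z.1 : ℕ) + 1) •
        (Pi.single ((⟨(z.1 : ℕ) + 1, h⟩ : Fin p), z.2) (1 : k) : (Fin p × Fin p) → k) := by
  funext ij
  obtain ⟨⟨i, hi⟩, ⟨j, hj⟩⟩ := ij
  obtain ⟨⟨zi, hzi⟩, ⟨zj, hzj⟩⟩ := z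
  simp only [sh1_apply, Pi.smul_apply, Pi.single_apply, smul_eq_mul, Prod.mk.injEq,
    Fin.mk.injEq] at *
  by_cases h1 : 0 < i
  · rw [dif_pos h1]
    by_cases h2 : i - 1 = zi ∧ j = zj
    · rw [if_pos h2, if_pos ⟨by omega, h2.2⟩]
      have hiz : i = zi + 1 := by omega
      subst hiz; ring
    · rw [if_neg h2, if_neg (by rintro ⟨hh1, hh2⟩; exact h2 ⟨by omega, hh2⟩)]
      ring
  · rw [dif_neg h1, if_neg (by rintro ⟨hh1, hh2⟩; omega)]
    ring

lemma sh2_single (s : ℕ → k) (z : Fin p × Fin p) (h : (z.2 : ℕ) + 1 < p) :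
    sh2 k s (Pi.single z 1) =
      s ((z.2 : ℕ) + 1) •
        (Pi.single (z.1, (⟨(z.2 : ℕ) + 1, h⟩ : Fin p)) (1 : k) : (Fin p × Fin p) → k) := by
  funext ij
  obtain ⟨⟨i, hi⟩, ⟨j, hj⟩⟩ := ij
  obtain ⟨⟨zi, hzi⟩, ⟨zj, hzj⟩⟩ := z
  simp only [sh2_apply, Pi.smul_apply, Pi.single_apply, smul_eq_mul, Prod.mk.injEq,
    Fin.mk.injEq] at *
  by_cases h1 : 0 < j
  · rw [dif_pos h1]
    by_cases h2 : i = zi ∧ j - 1 = zj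
    · rw [if_pos h2, if_pos ⟨h2.1, by omega⟩]
      have hjz : j = zj + 1 := by omega
      subst hjz; ring
    · rw [if_neg h2, if_neg (by rintro ⟨hh1, hh2⟩; exact h2 ⟨hh1, by omega⟩)]
      ring
  · rw [dif_neg h1, if_neg (by rintro ⟨hh1, hh2⟩; omega)]
    ring

lemma Bpow_single (h0 : 0 < p) :
    ∀ (j : ℕ) (hj : j < p),
      (Bop k p ^ j) (Pi.single ((⟨0, h0⟩ : Fin p), (⟨0, h0⟩ : Fin p)) 1)
        = Pi.single ((⟨0, h0⟩ : Fin p), (⟨j, hj⟩ : Fin p)) (1 : k) := by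
  intro j
  induction j with
  | zero => intro hj; rw [pow_zero, Module.End.one_apply]
  | succ j ih =>
      intro hj
      rw [pow_succ', Module.End.mul_apply, ih (by omega), Bop, LinearMap.add_apply]
      have hY := sh2_single k (fun _ => 1) ((⟨0, h0⟩ : Fin p), (⟨j, by omega⟩ : Fin p))
        (by simpa using hj)
      have hD := sh1_single k (fun n => (2 : k)⁻¹ * ((n - 1 : ℕ) : k))
        ((⟨0, h0⟩ : Fin p), (⟨j, by omega⟩ : Fin p)) (by simpa using (by omega : 1 < p))
      rw [Yop, hY, Dop, hD]
      norm_num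

lemma Xpow_single (h0 : 0 < p) :
    ∀ (i : ℕ) (hi : i < p) (jf : Fin p),
      (Xop k p ^ i) (Pi.single ((⟨0, h0⟩ : Fin p), jf) 1)
        = Pi.single ((⟨i, hi⟩ : Fin p), jf) (1 : k) := by
  intro i
  induction i with
  | zero => intro hi jf; rw [pow_zero, Module.End.one_apply]
  | succ i ih =>
      intro hi jf
      rw [pow_succ', Module.End.mul_apply, ih (by omega) jf]
      have hX := sh1_single k (fun _ => (1 : k)) ((⟨i, by omega⟩ : Fin p), jf)
        (by simpa using hi)
      rw [Xop, hX, one_smul]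

/- A-side relations. -/

lemma aA_pow_p : aA k p ^ p = 0 := by
  have h := RingQuot.mkAlgHom_rel k (ARel.apow (k := k) (p := p))
  simpa [aA, map_pow] using h

lemma bA_pow_p : bA k p ^ p = 0 := by
  have h := RingQuot.mkAlgHom_rel k (ARel.bpow (k := k) (p := p))
  simpa [bA, map_pow] using h

lemma bA_mul_aA :
    bA k p * aA k p = aA k p * bA k p + (2 : k)⁻¹ • aA k p ^ 2 := by
  have h := RingQuot.mkAlgHom_rel k (ARel.rel (k := k) (p := p))
  simpa [aA, bA, map_pow] using h

lemma bA_mul_aA_pow (i : ℕ) :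
    bA k p * aA k p ^ i
      = aA k p ^ i * bA k p + ((i : k) * (2 : k)⁻¹) • aA k p ^ (i + 1) := by
  induction i with
  | zero => simp
  | succ i ih =>
      have h2 : aA k p ^ (i + 1) * aA k p = aA k p ^ (i + 1 + 1) := (pow_succ _ _).symm
      have h3 : aA k p ^ i * aA k p ^ 2 = aA k p ^ (i + 1 + 1) := (pow_add _ i 2).symm
      rw [pow_succ, ← mul_assoc, ih, add_mul, smul_mul_assoc, mul_assoc, bA_mul_aA,
        mul_add, mul_smul_comm, h2, h3, ← mul_assoc, ← pow_succ, add_assoc]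
      congr 1
      rw [← add_smul]
      congr 1
      push_cast
      ring

end MonBasisAux

/-- The monomials `a^i b^j`, `0 ≤ i,j ≤ p−1`, form a `k`-vector space
basis of `A`; in particular `A` is finite dimensional with `dim_k A = p²`. -/
theorem monomials_basis_of_A (p : ℕ) [CharP k p] (hp : 2 < p) :
    (∃ 𝒷 : Module.Basis (Fin p × Fin p) k (A k p),
      ∀ ij : Fin p × Fin p, 𝒷 ij = aA k p ^ (ij.1 : ℕ) * bA k p ^ (ij.2 : ℕ)) ∧
    Module.Finite k (A k p) ∧ Module.finrank k (A k p) = p ^ 2 := by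
  classical
  have h0 : 0 < p := by omega
  have hprime : p.Prime := by
    rcases CharP.char_is_prime_or_zero k p with h | h
    · exact h
    · omega
  haveI : Fact p.Prime := ⟨hprime⟩
  -- the monomial family
  set v : Fin p × Fin p → A k p :=
    fun ij => aA k p ^ (ij.1 : ℕ) * bA k p ^ (ij.2 : ℕ) with hv
  set S : Submodule k (A k p) := Submodule.span k (Set.range v) with hS
  -- spanning
  have hmem : ∀ ij : Fin p × Fin p, v ij ∈ S :=
    fun ij => Submodule.subset_span ⟨ij, rfl⟩
  have hone : (1 : A k p) ∈ S := by
    have : v ((⟨0, h0⟩ : Fin p), (⟨0, h0⟩ : Fin p)) = 1 := by simp [hv]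
    rw [← this]; exact hmem _
  have ha : ∀ s ∈ S, aA k p * s ∈ S := by
    intro s hs
    refine Submodule.span_induction ?_ ?_ ?_ ?_ hs
    · rintro x ⟨⟨fi, fj⟩, rfl⟩
      simp only [hv]
      rw [← mul_assoc, ← pow_succ']
      by_cases hip : (fi : ℕ) + 1 < p
      · exact hmem (⟨(fi : ℕ) + 1, hip⟩, fj)
      · have : (fi : ℕ) + 1 = p := by have := fi.isLt; omega
        rw [this, MonBasisAux.aA_pow_p, zero_mul]
        exact S.zero_mem
    · rw [mul_zero]; exact S.zero_mem
    · intro x y _ _ hx hy; rw [mul_add]; exact S.add_mem hx hy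
    · intro c x _ hx; rw [mul_smul_comm]; exact S.smul_mem c hx
  have hb : ∀ s ∈ S, bA k p * s ∈ S := by
    intro s hs
    refine Submodule.span_induction ?_ ?_ ?_ ?_ hs
    · rintro x ⟨⟨fi, fj⟩, rfl⟩
      simp only [hv]
      rw [← mul_assoc, MonBasisAux.bA_mul_aA_pow, add_mul, smul_mul_assoc, mul_assoc,
        ← pow_succ']
      refine S.add_mem ?_ (S.smul_mem _ ?_)
      · by_cases hjp : (fj : ℕ) + 1 < p
        · exact hmem (fi, ⟨(fj : ℕ) + 1, hjp⟩)
        · have : (fj : ℕ) + 1 = p := by have := fj.isLt; omega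
          rw [this, MonBasisAux.bA_pow_p, mul_zero]
          exact S.zero_mem
      · by_cases hip : (fi : ℕ) + 1 < p
        · exact hmem (⟨(fi : ℕ) + 1, hip⟩, fj)
        · have : (fi : ℕ) + 1 = p := by have := fi.isLt; omega
          rw [this, MonBasisAux.aA_pow_p, zero_mul]
          exact S.zero_mem
    · rw [mul_zero]; exact S.zero_mem
    · intro x y _ _ hx hy; rw [mul_add]; exact S.add_mem hx hy
    · intro c x _ hx; rw [mul_smul_comm]; exact S.smul_mem c hx
  have key : ∀ y : FreeAlgebra k (Fin 2), ∀ s ∈ S,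
      RingQuot.mkAlgHom k (ARel k p) y * s ∈ S := by
    intro y
    induction y using FreeAlgebra.induction with
    | grade0 r =>
        intro s hs
        rw [AlgHom.commutes, ← Algebra.smul_def]
        exact S.smul_mem r hs
    | grade1 x =>
        intro s hs
        fin_cases x
        · exact ha s hs
        · exact hb s hs
    | mul x y ihx ihy =>
        intro s hs
        rw [map_mul, mul_assoc]
        exact ihx _ (ihy s hs)
    | add x y ihx ihy =>
        intro s hs
        rw [map_add, add_mul]
        exact S.add_mem (ihx s hs) (ihy s hs)
  have hspan : ⊤ ≤ S := by
    intro x _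
    obtain ⟨y, rfl⟩ := RingQuot.mkAlgHom_surjective k (ARel k p) x
    simpa using key y 1 hone
  -- linear independence via the representation
  have hrel : ∀ ⦃x y : FreeAlgebra k (Fin 2)⦄, ARel k p x y →
      MonBasisAux.rep k p x = MonBasisAux.rep k p y := by
    intro x y h
    cases h with
    | apow => rw [map_pow, MonBasisAux.rep_aF, MonBasisAux.X_pow_p, map_zero]
    | bpow => rw [map_pow, MonBasisAux.rep_bF, MonBasisAux.B_pow_p, map_zero]
    | rel =>
        rw [map_mul, map_add, map_smul, map_mul, map_pow, MonBasisAux.rep_aF,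
          MonBasisAux.rep_bF, MonBasisAux.B_mul_X]
  set Brep : A k p →ₐ[k] (((Fin p × Fin p) → k) →ₗ[k] ((Fin p × Fin p) → k)) :=
    RingQuot.liftAlgHom k ⟨MonBasisAux.rep k p, hrel⟩ with hBrep
  have hBa : Brep (aA k p) = MonBasisAux.Xop k p := by
    rw [hBrep, aA, RingQuot.liftAlgHom_mkAlgHom_apply, MonBasisAux.rep_aF]
  have hBb : Brep (bA k p) = MonBasisAux.Bop k p := by
    rw [hBrep, bA, RingQuot.liftAlgHom_mkAlgHom_apply, MonBasisAux.rep_bF]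
  set e0 : (Fin p × Fin p) → k := Pi.single ((⟨0, h0⟩ : Fin p), (⟨0, h0⟩ : Fin p)) 1 with he0
  set φ : A k p →ₗ[k] ((Fin p × Fin p) → k) :=
    { toFun := fun x => Brep x e0
      map_add' := fun x y => by simp only [map_add, LinearMap.add_apply]
      map_smul' := fun c x => by
        simp only [map_smul, LinearMap.smul_apply, RingHom.id_apply] } with hφ
  have hφv : ∀ ij : Fin p × Fin p, φ (v ij) = Pi.single ij 1 := by
    intro ij
    obtain ⟨fi, fj⟩ := ij
    show Brep (v (fi, fj)) e0 = _
    simp only [hv]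
    simp only [map_mul, map_pow, hBa, hBb]
    rw [Module.End.mul_apply, he0, MonBasisAux.Bpow_single k h0 (fj : ℕ) fj.isLt,
      MonBasisAux.Xpow_single k h0 (fi : ℕ) fi.isLt]
  have hli : LinearIndependent k v := by
    refine LinearIndependent.of_comp φ ?_
    have hcomp : ⇑φ ∘ v = ⇑(Pi.basisFun k (Fin p × Fin p)) := by
      funext ij
      rw [Function.comp_apply, hφv ij, Pi.basisFun_apply]
    rw [hcomp]
    exact (Pi.basisFun k (Fin p × Fin p)).linearIndependent
  let 𝒷 : Module.Basis (Fin p × Fin p) k (A k p) := Module.Basis.mk hli hspan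
  refine ⟨⟨𝒷, fun ij => Module.Basis.mk_apply hli hspan ij⟩, Module.Finite.of_basis 𝒷, ?_⟩
  rw [Module.finrank_eq_card_basis 𝒷, Fintype.card_prod, Fintype.card_fin, sq]

end
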